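/- There exists a two-qubit state that violates the Bell-CHSH inequality yet belongs to ACVENN: the Werner state σ_p with p = 18/25 satisfies M(σ_p) = 2p² > 1 and S(σ_p) ≥ 1. -/

import Mathlib

open Matrix Finset
open scoped Kronecker ComplexOrder Classical

noncomputable section

/-- A quantum state: positive semidefinite matrix of trace 1. -/
def IsState {n : ℕ} (ρ : Matrix (Fin n) (Fin n) ℂ) : Prop :=
  ρ.PosSemidef ∧ ρ.trace = 1

/-- Von Neumann entropy `S(ρ) = -∑ᵢ λᵢ log₂ λᵢ` over the eigenvalues of `ρ`
(with the convention `0 · log₂ 0 = 0`, which holds since `Real.logb 2 0 = 0`). -/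
noncomputable def vnEntropy {n : ℕ} (ρ : Matrix (Fin n) (Fin n) ℂ) : ℝ :=
  if h : ρ.IsHermitian then -∑ i, h.eigenvalues i * Real.logb 2 (h.eigenvalues i) else 0

/-- Reduced state `ρ_A`: partial trace over the second tensor factor,
using the ordered product basis `|00⟩,|01⟩,|10⟩,|11⟩`, i.e. `|ab⟩ ↦ 2a+b`. -/
def ptraceB (ρ : Matrix (Fin 4) (Fin 4) ℂ) : Matrix (Fin 2) (Fin 2) ℂ :=
  Matrix.of fun i j => ∑ k : Fin 2,
    ρ ⟨2 * i.val + k.val, by omega⟩ ⟨2 * j.val + k.val, by omega⟩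

/-- Reduced state `ρ_B`: partial trace over the first tensor factor. -/
def ptraceA (ρ : Matrix (Fin 4) (Fin 4) ℂ) : Matrix (Fin 2) (Fin 2) ℂ :=
  Matrix.of fun i j => ∑ k : Fin 2,
    ρ ⟨2 * k.val + i.val, by omega⟩ ⟨2 * k.val + j.val, by omega⟩

/-- Conditional von Neumann entropy `S(A|B) = S(ρ_AB) - S(ρ_A)`. -/
def condEntropy (ρ : Matrix (Fin 4) (Fin 4) ℂ) : ℝ :=
  vnEntropy ρ - vnEntropy (ptraceB ρ)

/-- Rank-one projector `|v⟩⟨v|`. -/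
def proj (v : Fin 4 → ℂ) : Matrix (Fin 4) (Fin 4) ℂ := Matrix.vecMulVec v (star v)

/-- The Bell basis `|φ⁺⟩, |φ⁻⟩, |ψ⁺⟩, |ψ⁻⟩`. -/
noncomputable def bell : Fin 4 → Fin 4 → ℂ :=
  ![![(Real.sqrt 2 : ℂ)⁻¹, 0, 0, (Real.sqrt 2 : ℂ)⁻¹],
    ![(Real.sqrt 2 : ℂ)⁻¹, 0, 0, -(Real.sqrt 2 : ℂ)⁻¹],
    ![0, (Real.sqrt 2 : ℂ)⁻¹, (Real.sqrt 2 : ℂ)⁻¹, 0],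
    ![0, (Real.sqrt 2 : ℂ)⁻¹, -(Real.sqrt 2 : ℂ)⁻¹, 0]]

/-- Kronecker product of two one-qubit matrices as a `4 × 4` matrix,
with the index identification `(a,b) ↦ 2a+b`. -/
def kron (A B : Matrix (Fin 2) (Fin 2) ℂ) : Matrix (Fin 4) (Fin 4) ℂ :=
  Matrix.reindex finProdFinEquiv finProdFinEquiv (A ⊗ₖ B)

/-- The Werner state `σ_p = p|φ⁺⟩⟨φ⁺| + (1-p) I₄/4`. -/
noncomputable def werner (p : ℝ) : Matrix (Fin 4) (Fin 4) ℂ :=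
  (p : ℂ) • proj (bell 0) + (((1 - p) / 4 : ℝ) : ℂ) • 1

/-- The Pauli matrices `σ₁, σ₂, σ₃`. -/
def pauli : Fin 3 → Matrix (Fin 2) (Fin 2) ℂ :=
  ![!![0, 1; 1, 0], !![0, -Complex.I; Complex.I, 0], !![1, 0; 0, -1]]

/-- The correlation matrix `T` of a two-qubit state, `t_ij = Tr[ρ (σᵢ ⊗ σⱼ)]`. -/
noncomputable def corrT (ρ : Matrix (Fin 4) (Fin 4) ℂ) : Matrix (Fin 3) (Fin 3) ℝ :=
  Matrix.of fun i j => (Matrix.trace (ρ * kron (pauli i) (pauli j))).re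

/-! ### Auxiliary lemmas -/

/-- The explicit Werner matrix for `p = 18/25`. -/
def Wex : Matrix (Fin 4) (Fin 4) ℂ :=
  !![43/100, 0, 0, 36/100; 0, 7/100, 0, 0; 0, 0, 7/100, 0; 36/100, 0, 0, 43/100]

lemma sqrt2_fact : ((Real.sqrt 2 : ℂ))⁻¹ * ((Real.sqrt 2 : ℂ))⁻¹ = 1/2 := by
  rw [← mul_inv]
  norm_cast
  rw [Real.mul_self_sqrt (by norm_num)]
  norm_num

lemma werner_eq : werner (18/25) = Wex := by
  ext i j
  fin_cases i <;> fin_cases j <;>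
    simp [werner, proj, bell, Wex, Matrix.vecMulVec_apply, Matrix.one_apply,
      Matrix.vecHead, Matrix.vecTail, -Matrix.cons_vecMulVec] <;>
    norm_num [sqrt2_fact, Complex.ext_iff]

lemma kron_ex (A B : Matrix (Fin 2) (Fin 2) ℂ) : kron A B =
    !![A 0 0 * B 0 0, A 0 0 * B 0 1, A 0 1 * B 0 0, A 0 1 * B 0 1;
       A 0 0 * B 1 0, A 0 0 * B 1 1, A 0 1 * B 1 0, A 0 1 * B 1 1;
       A 1 0 * B 0 0, A 1 0 * B 0 1, A 1 1 * B 0 0, A 1 1 * B 0 1;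
       A 1 0 * B 1 0, A 1 0 * B 1 1, A 1 1 * B 1 0, A 1 1 * B 1 1] := by
  ext i j
  fin_cases i <;> fin_cases j <;> rfl

lemma corrT_Wex : corrT Wex = Matrix.diagonal ![18/25, -(18/25), 18/25] := by
  ext i j
  fin_cases i <;> fin_cases j <;>
    simp [corrT, Matrix.trace, Matrix.diag, Matrix.mul_apply, Fin.sum_univ_four,
      kron_ex, pauli, Wex, Matrix.diagonal, Matrix.vecHead, Matrix.vecTail] <;>
    norm_num [Complex.ext_iff]

lemma TT_eq : (corrT (werner (18/25)))ᵀ * corrT (werner (18/25)) = (324/625 : ℝ) • 1 := by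
  rw [werner_eq, corrT_Wex]
  ext i j
  fin_cases i <;> fin_cases j <;>
    simp [Matrix.mul_apply, Fin.sum_univ_three, Matrix.diagonal, Matrix.transpose_apply,
      Matrix.one_apply, Matrix.vecHead, Matrix.vecTail] <;> norm_num

lemma eig_scalar {n : ℕ} {M : Matrix (Fin n) (Fin n) ℝ} (h : M.IsHermitian) (c : ℝ)
    (hM : M = c • (1 : Matrix (Fin n) (Fin n) ℝ)) (i : Fin n) : h.eigenvalues i = c := by
  have hv0 : ⇑(h.eigenvectorBasis i) ≠ 0 := by
    have hne := h.eigenvectorBasis.orthonormal.ne_zero i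
    intro hz
    apply hne
    ext j
    exact congrFun hz j
  obtain ⟨v, lam, hv0', hmv, hlam⟩ :
      ∃ (v : Fin n → ℝ) (lam : ℝ), v ≠ 0 ∧ M *ᵥ v = lam • v ∧ lam = h.eigenvalues i :=
    ⟨_, _, hv0, h.mulVec_eigenvectorBasis i, rfl⟩
  rw [← hlam]
  rw [hM, Matrix.smul_mulVec, Matrix.one_mulVec] at hmv
  exact (smul_left_injective ℝ hv0' hmv).symm

lemma eig_dichotomy {n : ℕ} {ρ : Matrix (Fin n) (Fin n) ℂ} (h : ρ.IsHermitian) (a b : ℝ)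
    (hann : (ρ - (a : ℂ) • 1) * (ρ - (b : ℂ) • 1) = 0) (i : Fin n) :
    h.eigenvalues i = a ∨ h.eigenvalues i = b := by
  set lam := h.eigenvalues i with hlam
  have hv0 : ⇑(h.eigenvectorBasis i) ≠ 0 := by
    have hne := h.eigenvectorBasis.orthonormal.ne_zero i
    intro hz
    apply hne
    ext j
    exact congrFun hz j
  have hmv : ρ *ᵥ ⇑(h.eigenvectorBasis i) = (lam : ℂ) • ⇑(h.eigenvectorBasis i) :=
    (h.mulVec_eigenvectorBasis i).trans (by ext j; simp [Complex.real_smul, hlam])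
  have hb : (ρ - (b : ℂ) • 1) *ᵥ ⇑(h.eigenvectorBasis i)
      = ((lam : ℂ) - b) • ⇑(h.eigenvectorBasis i) := by
    rw [Matrix.sub_mulVec, hmv, Matrix.smul_mulVec, Matrix.one_mulVec, sub_smul]
  have ha : (ρ - (a : ℂ) • 1) *ᵥ ⇑(h.eigenvectorBasis i)
      = ((lam : ℂ) - a) • ⇑(h.eigenvectorBasis i) := by
    rw [Matrix.sub_mulVec, hmv, Matrix.smul_mulVec, Matrix.one_mulVec, sub_smul]
  have key : (((lam : ℂ) - a) * ((lam : ℂ) - b)) • ⇑(h.eigenvectorBasis i) = 0 := by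
    have h0 : ((ρ - (a : ℂ) • 1) * (ρ - (b : ℂ) • 1)) *ᵥ ⇑(h.eigenvectorBasis i) = 0 := by
      rw [hann, Matrix.zero_mulVec]
    rw [← Matrix.mulVec_mulVec, hb, Matrix.mulVec_smul, ha, smul_smul, mul_comm] at h0
    exact h0
  rcases smul_eq_zero.mp key with hc | hv
  · rcases mul_eq_zero.mp hc with h1 | h1
    · left; exact_mod_cast sub_eq_zero.mp h1
    · right; exact_mod_cast sub_eq_zero.mp h1
  · exact absurd hv hv0

lemma trace_eq_sum_eigen {n : ℕ} {ρ : Matrix (Fin n) (Fin n) ℂ} (h : ρ.IsHermitian) :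
    ρ.trace = ∑ i, (h.eigenvalues i : ℂ) := by
  exact h.trace_eq_sum_eigenvalues
lemma eigen_sum_one {n : ℕ} {ρ : Matrix (Fin n) (Fin n) ℂ} (h : ρ.IsHermitian)
    (htr : ρ.trace = 1) : ∑ i, h.eigenvalues i = 1 := by
  have h1 := trace_eq_sum_eigen h
  rw [htr] at h1
  have h2 : ((∑ i, h.eigenvalues i : ℝ) : ℂ) = ((1 : ℝ) : ℂ) := by
    push_cast
    rw [← h1]
  exact_mod_cast h2

lemma vnEntropy_of_ann {ρ : Matrix (Fin 4) (Fin 4) ℂ} (h : ρ.IsHermitian)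
    (hann : (ρ - ((79/100 : ℝ) : ℂ) • 1) * (ρ - ((7/100 : ℝ) : ℂ) • 1) = 0)
    (htr : ρ.trace = 1) :
    vnEntropy ρ = -(79/100 * Real.logb 2 (79/100) + 3 * (7/100 * Real.logb 2 (7/100))) := by
  rw [vnEntropy, dif_pos h]
  have hd : ∀ i, h.eigenvalues i = 79/100 ∨ h.eigenvalues i = 7/100 :=
    fun i => eig_dichotomy h (79/100) (7/100) hann i
  have hsum : ∑ i, h.eigenvalues i = 1 := eigen_sum_one h htr
  set S : Finset (Fin 4) := Finset.univ.filter (fun i => h.eigenvalues i = 79/100) with hS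
  have hSval : ∀ i ∈ S, h.eigenvalues i = 79/100 := fun i hi => (Finset.mem_filter.mp hi).2
  have hScval : ∀ i ∈ Finset.univ \ S, h.eigenvalues i = 7/100 := by
    intro i hi
    rcases hd i with h1 | h1
    · exact absurd (Finset.mem_filter.mpr ⟨Finset.mem_univ i, h1⟩)
        (Finset.mem_sdiff.mp hi).2
    · exact h1
  have hsplit : ∀ (f : Fin 4 → ℝ), ∑ i, f i = ∑ i ∈ S, f i + ∑ i ∈ Finset.univ \ S, f i := by
    intro f
    rw [← Finset.sum_union Finset.disjoint_sdiff]
    congr 1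
    rw [Finset.union_sdiff_of_subset (Finset.subset_univ S)]
  have hcard4 : S.card ≤ 4 := by
    have := Finset.card_le_card (Finset.subset_univ S)
    simpa using this
  have hcardsd : (Finset.univ \ S).card = 4 - S.card := by
    rw [Finset.card_sdiff_of_subset (Finset.subset_univ S)]
    simp
  have hsum1 : ∑ i ∈ S, h.eigenvalues i = (S.card : ℝ) * (79/100) := by
    rw [Finset.sum_congr rfl hSval, Finset.sum_const, nsmul_eq_mul]
  have hsum2 : ∑ i ∈ Finset.univ \ S, h.eigenvalues i
      = ((4 - S.card : ℕ) : ℝ) * (7/100) := by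
    rw [Finset.sum_congr rfl hScval, Finset.sum_const, nsmul_eq_mul, hcardsd]
  have hcast : ((4 - S.card : ℕ) : ℝ) = 4 - (S.card : ℝ) := by
    rw [Nat.cast_sub hcard4]
    norm_num
  have hc1 : (S.card : ℝ) = 1 := by
    rw [hsplit (fun i => h.eigenvalues i), hsum1, hsum2, hcast] at hsum
    linarith
  have hcard1 : S.card = 1 := by exact_mod_cast hc1
  rw [hsplit (fun i => h.eigenvalues i * Real.logb 2 (h.eigenvalues i))]
  have e1 : ∑ i ∈ S, h.eigenvalues i * Real.logb 2 (h.eigenvalues i)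
      = 79/100 * Real.logb 2 (79/100) := by
    rw [Finset.sum_congr rfl (fun i hi => by rw [hSval i hi]), Finset.sum_const, hcard1,
      one_nsmul]
  have e2 : ∑ i ∈ Finset.univ \ S, h.eigenvalues i * Real.logb 2 (h.eigenvalues i)
      = 3 * (7/100 * Real.logb 2 (7/100)) := by
    rw [Finset.sum_congr rfl (fun i hi => by rw [hScval i hi]), Finset.sum_const, hcardsd,
      hcard1]
    norm_num
  rw [e1, e2]

lemma neg_mul_log_le (μ : ℝ) (hμ : 0 ≤ μ) :
    -(μ * Real.log μ) ≤ 1/2 - μ + μ * Real.log 2 := by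
  rcases eq_or_lt_of_le hμ with h0 | h0
  · rw [← h0]
    norm_num
  · have hx : (0 : ℝ) < 1 / (2 * μ) := by positivity
    have hlog := Real.log_le_sub_one_of_pos hx
    have hrw : Real.log (1 / (2 * μ)) = -(Real.log 2 + Real.log μ) := by
      rw [one_div, Real.log_inv, Real.log_mul (by norm_num) (ne_of_gt h0)]
    rw [hrw] at hlog
    have h2 := mul_le_mul_of_nonneg_left hlog hμ
    have h3 : μ * (1 / (2 * μ) - 1) = 1/2 - μ := by
      field_simp
    rw [h3] at h2
    nlinarith

lemma vnEntropy_le_one {σ : Matrix (Fin 2) (Fin 2) ℂ} (hpsd : σ.PosSemidef)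
    (htr : σ.trace = 1) : vnEntropy σ ≤ 1 := by
  have h := hpsd.1
  rw [vnEntropy, dif_pos h]
  have h0 : ∀ i, 0 ≤ h.eigenvalues i := fun i => hpsd.eigenvalues_nonneg i
  have hsum : ∑ i, h.eigenvalues i = 1 := eigen_sum_one h htr
  rw [Fin.sum_univ_two] at hsum ⊢
  have hl2 : (0 : ℝ) < Real.log 2 := Real.log_pos (by norm_num)
  have a1 := neg_mul_log_le (h.eigenvalues 0) (h0 0)
  have a2 := neg_mul_log_le (h.eigenvalues 1) (h0 1)
  rw [Real.logb, Real.logb]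
  rw [show -(h.eigenvalues 0 * (Real.log (h.eigenvalues 0) / Real.log 2) +
      h.eigenvalues 1 * (Real.log (h.eigenvalues 1) / Real.log 2)) =
      (-(h.eigenvalues 0 * Real.log (h.eigenvalues 0)) +
       -(h.eigenvalues 1 * Real.log (h.eigenvalues 1))) / Real.log 2 by ring]
  rw [div_le_one hl2]
  have hmul : (h.eigenvalues 0 + h.eigenvalues 1) * Real.log 2 = Real.log 2 := by
    rw [hsum, one_mul]
  linarith [hmul]

lemma log54_lb : Real.log (5/4) ≥ 1/5 + 1/50 + 1/375 - 1/500 := by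
  have h := Real.abs_log_sub_add_sum_range_le (x := 1/5) (by rw [abs_of_pos] <;> norm_num) 3
  rw [abs_of_pos (by norm_num : (0:ℝ) < 1/5)] at h
  have hs : ∑ i ∈ Finset.range 3, (1/5 : ℝ) ^ (i + 1) / (i + 1) = 1/5 + 1/50 + 1/375 := by
    rw [Finset.sum_range_succ, Finset.sum_range_succ, Finset.sum_range_one]
    norm_num
  rw [hs] at h
  have hlog : Real.log (1 - 1/5 : ℝ) = -Real.log (5/4) := by
    rw [show (1 - 1/5 : ℝ) = (5/4)⁻¹ by norm_num, Real.log_inv]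
  rw [hlog] at h
  have h2 := (abs_le.mp h).2
  have herr : ((1:ℝ)/5) ^ (3 + 1) / (1 - 1/5) = 1/500 := by norm_num
  rw [herr] at h2
  linarith

lemma log79_ub : Real.log (79/80) ≤ -(1/80) + 1/6320 := by
  have h := Real.abs_log_sub_add_sum_range_le (x := 1/80) (by rw [abs_of_pos] <;> norm_num) 1
  rw [abs_of_pos (by norm_num : (0:ℝ) < 1/80)] at h
  have hs : ∑ i ∈ Finset.range 1, (1/80 : ℝ) ^ (i + 1) / (i + 1) = 1/80 := by
    rw [Finset.sum_range_one]; norm_num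
  rw [hs] at h
  have hlog : Real.log (1 - 1/80 : ℝ) = Real.log (79/80) := by norm_num
  rw [hlog] at h
  have h2 := (abs_le.mp h).2
  have herr : ((1:ℝ)/80) ^ (1 + 1) / (1 - 1/80) = 1/6320 := by norm_num
  rw [herr] at h2
  linarith

lemma log78_ub : Real.log (7/8) ≤ -(1/8) + 1/56 := by
  have h := Real.abs_log_sub_add_sum_range_le (x := 1/8) (by rw [abs_of_pos] <;> norm_num) 1
  rw [abs_of_pos (by norm_num : (0:ℝ) < 1/8)] at h
  have hs : ∑ i ∈ Finset.range 1, (1/8 : ℝ) ^ (i + 1) / (i + 1) = 1/8 := by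
    rw [Finset.sum_range_one]; norm_num
  rw [hs] at h
  have hlog : Real.log (1 - 1/8 : ℝ) = Real.log (7/8) := by norm_num
  rw [hlog] at h
  have h2 := (abs_le.mp h).2
  have herr : ((1:ℝ)/8) ^ (1 + 1) / (1 - 1/8) = 1/56 := by norm_num
  rw [herr] at h2
  linarith

lemma one_le_E :
    1 ≤ -(79/100 * Real.logb 2 (79/100) + 3 * (7/100 * Real.logb 2 (7/100)) : ℝ) := by
  have hl2 : (0 : ℝ) < Real.log 2 := Real.log_pos (by norm_num)
  have hl2u : Real.log 2 < 0.6931471808 := Real.log_two_lt_d9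
  have e1 : Real.log (79/100 : ℝ) = Real.log (79/80) - Real.log (5/4) := by
    rw [show (79/100 : ℝ) = (79/80) / (5/4) by norm_num,
      Real.log_div (by norm_num) (by norm_num)]
  have e2 : Real.log (7/100 : ℝ)
      = Real.log (7/8) - 3 * Real.log 2 - 2 * Real.log (5/4) := by
    have h5 : Real.log (5 : ℝ) = 2 * Real.log 2 + Real.log (5/4) := by
      rw [show (5 : ℝ) = 2 * 2 * (5/4) by norm_num,
        Real.log_mul (by norm_num) (by norm_num),
        Real.log_mul (by norm_num) (by norm_num)]
      ring
    have h7 : Real.log (7/100 : ℝ) = Real.log (7/8) + Real.log 2 - 2 * Real.log 5 := by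
      rw [show (7/100 : ℝ) = (7/8) * 2 / (5 * 5) by norm_num,
        Real.log_div (by norm_num) (by norm_num),
        Real.log_mul (by norm_num) (by norm_num),
        Real.log_mul (by norm_num) (by norm_num)]
      ring
    rw [h7, h5]
    ring
  rw [Real.logb, Real.logb]
  rw [show -(79/100 * (Real.log (79/100) / Real.log 2) +
      3 * (7/100 * (Real.log (7/100) / Real.log 2))) =
      (-(79/100 * Real.log (79/100) + 21/100 * Real.log (7/100))) / Real.log 2 by ring]
  rw [le_div_iff₀ hl2, one_mul, e1, e2]
  have b1 := log54_lb
  have b2 := log79_ub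
  have b3 := log78_ub
  linarith
lemma smul_psd {n : ℕ} (c : ℝ) (hc : 0 ≤ c) {M : Matrix (Fin n) (Fin n) ℂ}
    (hM : M.PosSemidef) : (((c : ℝ) : ℂ) • M).PosSemidef := by
  rw [Matrix.posSemidef_iff_dotProduct_mulVec]
  constructor
  · have h1 := hM.1
    unfold Matrix.IsHermitian at h1 ⊢
    rw [Matrix.conjTranspose_smul, h1]
    congr 1
    simp [RCLike.star_def, Complex.conj_ofReal]
  · intro x
    have h1 := hM.dotProduct_mulVec_nonneg x
    rw [Matrix.smul_mulVec, dotProduct_smul]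
    rw [Complex.le_def] at h1 ⊢
    constructor
    · simp only [smul_eq_mul, Complex.mul_re, Complex.ofReal_re, Complex.ofReal_im,
        Complex.zero_re, Complex.zero_im, zero_mul, sub_zero] at h1 ⊢
      exact mul_nonneg hc h1.1
    · simp only [smul_eq_mul, Complex.mul_im, Complex.ofReal_re, Complex.ofReal_im,
        Complex.zero_re, Complex.zero_im, zero_mul, add_zero] at h1 ⊢
      rw [← h1.2]
      ring

lemma proj_psd (v : Fin 4 → ℂ) : (proj v).PosSemidef := by
  rw [Matrix.posSemidef_iff_dotProduct_mulVec]
  constructor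
  · ext i j
    simp [proj, Matrix.vecMulVec_apply, Matrix.conjTranspose_apply, star_mul', mul_comm]
  · intro x
    have key : star x ⬝ᵥ (proj v) *ᵥ x = star (star v ⬝ᵥ x) * (star v ⬝ᵥ x) := by
      simp only [proj, dotProduct, Matrix.mulVec, Matrix.vecMulVec_apply,
        Fin.sum_univ_four, Pi.star_apply, star_mul', star_star, star_add]
      ring
    rw [key]
    exact star_mul_self_nonneg _

lemma werner_psd : (werner (18/25)).PosSemidef := by
  rw [werner]
  exact (smul_psd (18/25) (by norm_num) (proj_psd _)).add
    (smul_psd ((1 - 18/25)/4) (by norm_num) Matrix.PosSemidef.one)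

lemma werner_trace : (werner (18/25)).trace = 1 := by
  rw [werner_eq]
  simp [Wex, Matrix.trace, Matrix.diag, Fin.sum_univ_four]
  norm_num

lemma wex_ann : (Wex - ((79/100 : ℝ) : ℂ) • 1) * (Wex - ((7/100 : ℝ) : ℂ) • 1) = 0 := by
  ext i j
  fin_cases i <;> fin_cases j <;>
    simp [Wex, Matrix.mul_apply, Fin.sum_univ_four, Matrix.one_apply, Matrix.smul_apply,
      Matrix.sub_apply, Matrix.vecHead, Matrix.vecTail] <;>
    norm_num [Complex.ext_iff]

lemma ptraceB_ex (ρ : Matrix (Fin 4) (Fin 4) ℂ) : ptraceB ρ =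
    !![ρ 0 0 + ρ 1 1, ρ 0 2 + ρ 1 3; ρ 2 0 + ρ 3 1, ρ 2 2 + ρ 3 3] := by
  ext i j
  fin_cases i <;> fin_cases j <;>
    simp [ptraceB, Fin.sum_univ_two] <;> rfl

lemma ptraceB_trace (ρ : Matrix (Fin 4) (Fin 4) ℂ) : (ptraceB ρ).trace = ρ.trace := by
  rw [ptraceB_ex]
  simp [Matrix.trace, Matrix.diag, Fin.sum_univ_two, Fin.sum_univ_four]
  ring

lemma ptraceB_psd {ρ : Matrix (Fin 4) (Fin 4) ℂ} (hρ : ρ.PosSemidef) :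
    (ptraceB ρ).PosSemidef := by
  have hH := hρ.1
  have hstar : ∀ a b, star (ρ a b) = ρ b a := by
    intro a b
    conv_rhs => rw [← hH]
    rw [Matrix.conjTranspose_apply]
  rw [Matrix.posSemidef_iff_dotProduct_mulVec]
  constructor
  · ext i j
    fin_cases i <;> fin_cases j <;>
      simp [ptraceB_ex, Matrix.conjTranspose_apply, star_add, hstar]
  · intro x
    have key : star x ⬝ᵥ (ptraceB ρ) *ᵥ x
        = (star ![x 0, 0, x 1, 0] ⬝ᵥ ρ *ᵥ ![x 0, 0, x 1, 0])
        + (star ![0, x 0, 0, x 1] ⬝ᵥ ρ *ᵥ ![0, x 0, 0, x 1]) := by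
      simp [ptraceB_ex, dotProduct, Matrix.mulVec, Fin.sum_univ_two,
        Fin.sum_univ_four]
      ring
    rw [key]
    exact add_nonneg (hρ.dotProduct_mulVec_nonneg _) (hρ.dotProduct_mulVec_nonneg _)

lemma werner_ann : (werner (18/25) - ((79/100 : ℝ) : ℂ) • 1)
    * (werner (18/25) - ((7/100 : ℝ) : ℂ) • 1) = 0 := by
  rw [werner_eq]
  exact wex_ann

/-- The Werner state with `p = 18/25` violates the Bell-CHSH inequality
(`M(σ_p) = 2p² > 1`, where `M` is the sum of the two largest eigenvalues of `TᵀT`)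
yet satisfies `S(σ_p) ≥ 1` and belongs to ACVENN. -/
theorem stmt_17 :
    ∃ h : ((corrT (werner (18 / 25)))ᵀ * corrT (werner (18 / 25))).IsHermitian,
      IsGreatest {x : ℝ | ∃ i j : Fin 3, i ≠ j ∧ x = h.eigenvalues i + h.eigenvalues j}
        (2 * (18 / 25 : ℝ) ^ 2) ∧
      1 < 2 * (18 / 25 : ℝ) ^ 2 ∧
      1 ≤ vnEntropy (werner (18 / 25)) ∧
      (IsState (werner (18 / 25)) ∧
        ∀ U ∈ Matrix.unitaryGroup (Fin 4) ℂ,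
          0 ≤ condEntropy (U * werner (18 / 25) * Uᴴ)) := by
  have hTT : ((corrT (werner (18/25)))ᵀ * corrT (werner (18/25))).IsHermitian := by
    rw [TT_eq]
    ext i j
    simp [Matrix.conjTranspose_apply, Matrix.one_apply, eq_comm]
  refine ⟨hTT, ?_, by norm_num, ?_, ⟨werner_psd, werner_trace⟩, ?_⟩
  · have heig : ∀ i, hTT.eigenvalues i = 324/625 := fun i => eig_scalar hTT _ TT_eq i
    constructor
    · exact ⟨0, 1, by decide, by rw [heig 0, heig 1]; norm_num⟩
    · rintro x ⟨i, j, hij, rfl⟩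
      rw [heig i, heig j]
      norm_num
  · rw [vnEntropy_of_ann werner_psd.1 werner_ann werner_trace]
    exact one_le_E
  · intro U hU
    have hU1 : Uᴴ * U = 1 := by
      rw [← Matrix.star_eq_conjTranspose]
      exact Matrix.mem_unitaryGroup_iff'.mp hU
    have hU2 : U * Uᴴ = 1 := by
      rw [← Matrix.star_eq_conjTranspose]
      exact Matrix.mem_unitaryGroup_iff.mp hU
    have hpsd' : (U * werner (18/25) * Uᴴ).PosSemidef :=
      werner_psd.mul_mul_conjTranspose_same U
    have htr' : (U * werner (18/25) * Uᴴ).trace = 1 := by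
      rw [Matrix.trace_mul_comm, ← Matrix.mul_assoc, hU1, Matrix.one_mul, werner_trace]
    have e1 : ∀ (c : ℂ), U * werner (18/25) * Uᴴ - c • 1
        = U * (werner (18/25) - c • 1) * Uᴴ := by
      intro c
      rw [Matrix.mul_sub, Matrix.sub_mul, Matrix.mul_smul, Matrix.smul_mul, Matrix.mul_one,
        hU2]
    have hcanc : ∀ Z : Matrix (Fin 4) (Fin 4) ℂ, Uᴴ * (U * Z) = Z := fun Z => by
      rw [← Matrix.mul_assoc, hU1, Matrix.one_mul]
    have hann' : (U * werner (18/25) * Uᴴ - ((79/100 : ℝ) : ℂ) • 1)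
        * (U * werner (18/25) * Uᴴ - ((7/100 : ℝ) : ℂ) • 1) = 0 := by
      rw [e1, e1]
      simp only [Matrix.mul_assoc, hcanc]
      rw [show (werner (18/25) - ((79/100 : ℝ) : ℂ) • 1) *
          ((werner (18/25) - ((7/100 : ℝ) : ℂ) • 1) * Uᴴ)
          = ((werner (18/25) - ((79/100 : ℝ) : ℂ) • 1) *
            (werner (18/25) - ((7/100 : ℝ) : ℂ) • 1)) * Uᴴ from
        (Matrix.mul_assoc _ _ _).symm, werner_ann, Matrix.zero_mul, Matrix.mul_zero]
    have hE : vnEntropy (U * werner (18/25) * Uᴴ)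
        = -(79/100 * Real.logb 2 (79/100) + 3 * (7/100 * Real.logb 2 (7/100))) :=
      vnEntropy_of_ann hpsd'.1 hann' htr'
    have hPT : vnEntropy (ptraceB (U * werner (18/25) * Uᴴ)) ≤ 1 :=
      vnEntropy_le_one (ptraceB_psd hpsd') (by rw [ptraceB_trace, htr'])
    have hE1 := one_le_E
    rw [condEntropy, hE]
    linarith
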